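/- Let ℓ > 0 and let ℬ ⊆ (ℤ/2)^ℓ be a linearly independent set of vectors over the field with two elements. If 𝒜 ⊆ (ℤ/2)^ℓ has |𝒜| ≥ 5 and 𝒜 + 𝒜 ⊆ ℬ + ℬ, then there is a unique x ∈ (ℤ/2)^ℓ such that 𝒜 + x ⊆ ℬ. -/

import Mathlib

open scoped Pointwise

namespace Stmt2Aux

variable {ℓ : ℕ}

local notation "V" => (Fin ℓ → ZMod 2)

lemma my_add_self (v : V) : v + v = 0 := by
  funext i; exact CharTwo.add_self_eq_zero _

lemma eq_of_add_eq_zero' {x y : V} (h : x + y = 0) : x = y := by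
  have := congrArg (· + y) h
  simpa [add_assoc, my_add_self] using this

lemma my_zsum (ℬ : Set V) (hB : LinearIndependent (ZMod 2) ((↑) : ℬ → V))
    (s : Finset V) (hs : ↑s ⊆ ℬ) (h : ∑ x ∈ s, x = 0) : s = ∅ := by
  by_contra hne
  obtain ⟨a, ha⟩ := Finset.nonempty_of_ne_empty hne
  set t : Finset ℬ := s.attach.map ⟨fun x => ⟨x.1, hs x.2⟩, by
    intro x y hxy
    exact Subtype.ext (congrArg Subtype.val hxy : _)⟩ with ht
  have hsum : ∑ i ∈ t, (1 : ZMod 2) • (i : V) = 0 := by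
    simp only [ht, Finset.sum_map, one_smul, Function.Embedding.coeFn_mk]
    exact (Finset.sum_attach s (fun x => x)).trans h
  have := linearIndependent_iff'.mp hB t (fun _ => 1) hsum ⟨a, hs ha⟩ (by
    simp only [ht, Finset.mem_map, Function.Embedding.coeFn_mk]
    exact ⟨⟨a, ha⟩, Finset.mem_attach _ _, rfl⟩)
  simp at this

lemma my_sum_inj (ℬ : Set V) (hB : LinearIndependent (ZMod 2) ((↑) : ℬ → V))
    (s t : Finset V) (hs : ↑s ⊆ ℬ) (ht : ↑t ⊆ ℬ)
    (h : ∑ x ∈ s, x = ∑ x ∈ t, x) : s = t := by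
  classical
  have hd : Disjoint (s \ t) (t \ s) := disjoint_sdiff_sdiff
  have hsub : ∑ x ∈ s \ t, x = ∑ x ∈ t \ s, x := by
    have := Finset.sum_sdiff_sub_sum_sdiff (s₂ := s) (s₁ := t) (f := fun x : V => x)
    rw [h, sub_self] at this
    exact sub_eq_zero.mp this
  have hz : ∑ x ∈ (s \ t) ∪ (t \ s), x = 0 := by
    rw [Finset.sum_union hd, hsub, my_add_self]
  have hempty := my_zsum ℬ hB _ (by
    intro x hx
    simp only [Finset.coe_union, Set.mem_union, Finset.coe_sdiff, Set.mem_diff] at hx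
    rcases hx with ⟨hx, _⟩ | ⟨hx, _⟩
    · exact hs hx
    · exact ht hx) hz
  have h1 : s \ t = ∅ := by
    have := Finset.union_eq_empty.mp hempty
    exact this.1
  have h2 : t \ s = ∅ := (Finset.union_eq_empty.mp hempty).2
  exact Finset.Subset.antisymm (Finset.sdiff_eq_empty_iff_subset.mp h1)
    (Finset.sdiff_eq_empty_iff_subset.mp h2)

lemma rep_unique (ℬ : Set V) (hB : LinearIndependent (ZMod 2) ((↑) : ℬ → V))
    {u : V} {b c b' c' : V} (hub : u = b + c) (hub' : u = b' + c')
    (hb : b ∈ ℬ) (hc : c ∈ ℬ) (hb' : b' ∈ ℬ) (hc' : c' ∈ ℬ)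
    (hbc : b ≠ c) (hbc' : b' ≠ c') :
    (b' = b ∧ c' = c) ∨ (b' = c ∧ c' = b) := by
  classical
  have hfin : ({b, c} : Finset V) = {b', c'} := by
    apply my_sum_inj ℬ hB
    · intro x hx; simp at hx; rcases hx with rfl | rfl; exacts [hb, hc]
    · intro x hx; simp at hx; rcases hx with rfl | rfl; exacts [hb', hc']
    · rw [Finset.sum_pair hbc, Finset.sum_pair hbc', ← hub, ← hub']
  have hmem : b' ∈ ({b, c} : Finset V) := by rw [hfin]; simp
  simp only [Finset.mem_insert, Finset.mem_singleton] at hmem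
  rcases hmem with h | h
  · left
    refine ⟨h, ?_⟩
    have h2 : b + c = b + c' := by rw [← hub, hub', h]
    exact (add_left_cancel h2.symm : c' = c)
  · right
    refine ⟨h, ?_⟩
    have h2 : b + c = c + c' := by rw [← hub, hub', h]
    rw [add_comm b c] at h2
    exact (add_left_cancel h2.symm : c' = b)

lemma intersect (ℬ : Set V) (hB : LinearIndependent (ZMod 2) ((↑) : ℬ → V))
    {u v b c d e : V} (hu : u = b + c) (hv : v = d + e)
    (hb : b ∈ ℬ) (hc : c ∈ ℬ) (hd : d ∈ ℬ) (he : e ∈ ℬ)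
    (hbc : b ≠ c) (hde : d ≠ e) (huv : u ≠ v) (hm : u + v ∈ ℬ + ℬ) :
    b = d ∨ b = e ∨ c = d ∨ c = e := by
  classical
  by_contra hcon
  push_neg at hcon
  obtain ⟨h1, h2, h3, h4⟩ := hcon
  rw [Set.mem_add] at hm
  obtain ⟨p, hp, q, hq, hpq⟩ := hm
  have hpqne : p ≠ q := by
    rintro rfl
    have h0 : u + v = 0 := by rw [← hpq, my_add_self]
    exact huv (eq_of_add_eq_zero' h0)
  have hS : ({b, c, d, e} : Finset V) = {p, q} := by
    apply my_sum_inj ℬ hB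
    · intro x hx; simp at hx; rcases hx with rfl | rfl | rfl | rfl
      exacts [hb, hc, hd, he]
    · intro x hx; simp at hx; rcases hx with rfl | rfl; exacts [hp, hq]
    · rw [Finset.sum_pair hpqne]
      rw [show ({b, c, d, e} : Finset V) = insert b (insert c (insert d {e})) from rfl]
      rw [Finset.sum_insert (by simp [h1, h2, hbc]),
          Finset.sum_insert (by simp [h3, h4]),
          Finset.sum_insert (by simp [hde]), Finset.sum_singleton]
      rw [hpq, hu, hv]
      ring
  have hcard : ({b, c, d, e} : Finset V).card = 4 := by
    rw [show ({b, c, d, e} : Finset V) = insert b (insert c (insert d {e})) from rfl]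
    rw [Finset.card_insert_of_notMem (by simp [h1, h2, hbc]),
        Finset.card_insert_of_notMem (by simp [h3, h4]),
        Finset.card_insert_of_notMem (by simp [hde]), Finset.card_singleton]
  rw [hS, Finset.card_pair hpqne] at hcard
  omega

lemma mem_pair_extract {ℬ : Set V} {u g b c : V} (h : u = b + c) (hbc : b ≠ c)
    (hg : g = b ∨ g = c) (hb : b ∈ ℬ) (hc : c ∈ ℬ) :
    ∃ z, z ∈ ℬ ∧ z ≠ g ∧ u = g + z := by
  rcases hg with rfl | rfl
  · exact ⟨c, hc, fun hcg => hbc hcg.symm, h⟩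
  · exact ⟨b, hb, fun hbg => hbc hbg, by rw [h, add_comm]⟩

lemma common_of_intersect (ℬ : Set V) (hB : LinearIndependent (ZMod 2) ((↑) : ℬ → V))
    {u v b c d e : V} (hu : u = b + c) (hv : v = d + e)
    (hb : b ∈ ℬ) (hc : c ∈ ℬ) (hd : d ∈ ℬ) (he : e ∈ ℬ)
    (hbc : b ≠ c) (hde : d ≠ e) (huv : u ≠ v) (hm : u + v ∈ ℬ + ℬ) :
    ∃ g z w, g ∈ ℬ ∧ z ∈ ℬ ∧ w ∈ ℬ ∧ z ≠ g ∧ w ≠ g ∧ u = g + z ∧ v = g + w := by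
  rcases intersect ℬ hB hu hv hb hc hd he hbc hde huv hm with h | h | h | h
  · obtain ⟨z, hz, hzg, hu'⟩ := mem_pair_extract hu hbc (Or.inl rfl) hb hc
    obtain ⟨w, hw, hwg, hv'⟩ := mem_pair_extract hv hde (Or.inl h) hd he
    exact ⟨b, z, w, hb, hz, hw, hzg, hwg, hu', hv'⟩
  · obtain ⟨z, hz, hzg, hu'⟩ := mem_pair_extract hu hbc (Or.inl rfl) hb hc
    obtain ⟨w, hw, hwg, hv'⟩ := mem_pair_extract hv hde (Or.inr h) hd he
    exact ⟨b, z, w, hb, hz, hw, hzg, hwg, hu', hv'⟩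
  · obtain ⟨z, hz, hzg, hu'⟩ := mem_pair_extract hu hbc (Or.inr rfl) hb hc
    obtain ⟨w, hw, hwg, hv'⟩ := mem_pair_extract hv hde (Or.inl h) hd he
    exact ⟨c, z, w, hc, hz, hw, hzg, hwg, hu', hv'⟩
  · obtain ⟨z, hz, hzg, hu'⟩ := mem_pair_extract hu hbc (Or.inr rfl) hb hc
    obtain ⟨w, hw, hwg, hv'⟩ := mem_pair_extract hv hde (Or.inr h) hd he
    exact ⟨c, z, w, hc, hz, hw, hzg, hwg, hu', hv'⟩

lemma pigeon (ℬ : Set V) (hB : LinearIndependent (ZMod 2) ((↑) : ℬ → V))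
    {u₁ u₂ u₃ w g z₁ z₂ z₃ d e : V}
    (h1 : u₁ = g + z₁) (h2 : u₂ = g + z₂) (h3 : u₃ = g + z₃) (hw : w = d + e)
    (hg : g ∈ ℬ) (hz1 : z₁ ∈ ℬ) (hz2 : z₂ ∈ ℬ) (hz3 : z₃ ∈ ℬ) (hd : d ∈ ℬ) (he : e ∈ ℬ)
    (hz1g : z₁ ≠ g) (hz2g : z₂ ≠ g) (hz3g : z₃ ≠ g) (hde : d ≠ e)
    (d12 : u₁ ≠ u₂) (d13 : u₁ ≠ u₃) (d23 : u₂ ≠ u₃)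
    (dw1 : u₁ ≠ w) (dw2 : u₂ ≠ w) (dw3 : u₃ ≠ w)
    (m1 : u₁ + w ∈ ℬ + ℬ) (m2 : u₂ + w ∈ ℬ + ℬ) (m3 : u₃ + w ∈ ℬ + ℬ) :
    g = d ∨ g = e := by
  by_contra hcon
  push_neg at hcon
  obtain ⟨hgd, hge⟩ := hcon
  have hz12 : z₁ ≠ z₂ := fun h => d12 (by rw [h1, h2, h])
  have hz13 : z₁ ≠ z₃ := fun h => d13 (by rw [h1, h3, h])
  have hz23 : z₂ ≠ z₃ := fun h => d23 (by rw [h2, h3, h])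
  have c1 : z₁ = d ∨ z₁ = e := by
    rcases intersect ℬ hB h1 hw hg hz1 hd he (Ne.symm hz1g) hde dw1 m1 with h | h | h | h
    · exact absurd h hgd
    · exact absurd h hge
    · exact Or.inl h
    · exact Or.inr h
  have c2 : z₂ = d ∨ z₂ = e := by
    rcases intersect ℬ hB h2 hw hg hz2 hd he (Ne.symm hz2g) hde dw2 m2 with h | h | h | h
    · exact absurd h hgd
    · exact absurd h hge
    · exact Or.inl h
    · exact Or.inr h
  have c3 : z₃ = d ∨ z₃ = e := by
    rcases intersect ℬ hB h3 hw hg hz3 hd he (Ne.symm hz3g) hde dw3 m3 with h | h | h | h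
    · exact absurd h hgd
    · exact absurd h hge
    · exact Or.inl h
    · exact Or.inr h
  rcases c1 with h | h <;> rcases c2 with h' | h' <;> rcases c3 with h'' | h'' <;>
    simp_all

lemma sunflower (ℬ : Set V) (hB : LinearIndependent (ZMod 2) ((↑) : ℬ → V))
    {u₁ u₂ u₃ u₄ b₁ c₁ b₂ c₂ b₃ c₃ b₄ c₄ : V}
    (h1 : u₁ = b₁ + c₁) (h2 : u₂ = b₂ + c₂) (h3 : u₃ = b₃ + c₃) (h4 : u₄ = b₄ + c₄)
    (hb1 : b₁ ∈ ℬ) (hc1 : c₁ ∈ ℬ) (hb2 : b₂ ∈ ℬ) (hc2 : c₂ ∈ ℬ)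
    (hb3 : b₃ ∈ ℬ) (hc3 : c₃ ∈ ℬ) (hb4 : b₄ ∈ ℬ) (hc4 : c₄ ∈ ℬ)
    (ne1 : b₁ ≠ c₁) (ne2 : b₂ ≠ c₂) (ne3 : b₃ ≠ c₃) (ne4 : b₄ ≠ c₄)
    (d12 : u₁ ≠ u₂) (d13 : u₁ ≠ u₃) (d14 : u₁ ≠ u₄)
    (d23 : u₂ ≠ u₃) (d24 : u₂ ≠ u₄) (d34 : u₃ ≠ u₄)
    (m12 : u₁ + u₂ ∈ ℬ + ℬ) (m13 : u₁ + u₃ ∈ ℬ + ℬ) (m14 : u₁ + u₄ ∈ ℬ + ℬ)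
    (m23 : u₂ + u₃ ∈ ℬ + ℬ) (m24 : u₂ + u₄ ∈ ℬ + ℬ) (m34 : u₃ + u₄ ∈ ℬ + ℬ) :
    ∃ g z₁ z₂ z₃ z₄, g ∈ ℬ ∧ z₁ ∈ ℬ ∧ z₂ ∈ ℬ ∧ z₃ ∈ ℬ ∧ z₄ ∈ ℬ ∧
      z₁ ≠ g ∧ z₂ ≠ g ∧ z₃ ≠ g ∧ z₄ ≠ g ∧
      u₁ = g + z₁ ∧ u₂ = g + z₂ ∧ u₃ = g + z₃ ∧ u₄ = g + z₄ := by
  obtain ⟨g, v₁, v₂, hg, hv1, hv2, hv1g, hv2g, hu1, hu2⟩ :=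
    common_of_intersect ℬ hB h1 h2 hb1 hc1 hb2 hc2 ne1 ne2 d12 m12
  have hv12 : v₁ ≠ v₂ := fun h => d12 (by rw [hu1, hu2, h])
  by_cases hg3 : g = b₃ ∨ g = c₃
  · -- g is in pair 3; apply pigeon to pair 4
    obtain ⟨z₃, hz3, hz3g, hu3⟩ := mem_pair_extract h3 ne3 hg3 hb3 hc3
    have hp := pigeon ℬ hB hu1 hu2 hu3 h4 hg hv1 hv2 hz3 hb4 hc4
      hv1g hv2g hz3g ne4 d12 d13 d23 d14 d24 d34 m14 m24 m34
    obtain ⟨z₄, hz4, hz4g, hu4⟩ := mem_pair_extract h4 ne4 hp hb4 hc4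
    exact ⟨g, v₁, v₂, z₃, z₄, hg, hv1, hv2, hz3, hz4, hv1g, hv2g, hz3g, hz4g,
      hu1, hu2, hu3, hu4⟩
  · -- triangle: pair 3 = {v₁, v₂}, contradiction via pair 4
    exfalso
    push_neg at hg3
    obtain ⟨hgb3, hgc3⟩ := hg3
    have i31 : v₁ = b₃ ∨ v₁ = c₃ := by
      rcases intersect ℬ hB hu1 h3 hg hv1 hb3 hc3 (Ne.symm hv1g) ne3 d13 m13
        with h | h | h | h
      · exact absurd h hgb3
      · exact absurd h hgc3
      · exact Or.inl h
      · exact Or.inr h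
    have i32 : v₂ = b₃ ∨ v₂ = c₃ := by
      rcases intersect ℬ hB hu2 h3 hg hv2 hb3 hc3 (Ne.symm hv2g) ne3 d23 m23
        with h | h | h | h
      · exact absurd h hgb3
      · exact absurd h hgc3
      · exact Or.inl h
      · exact Or.inr h
    have hu3 : u₃ = v₁ + v₂ := by
      rcases i31 with h | h <;> rcases i32 with h' | h'
      · exact absurd (h.trans h'.symm) hv12
      · rw [h3, h, h']
      · rw [h3, h, h', add_comm]
      · exact absurd (h.trans h'.symm) hv12
    -- pair 4 must meet all three triangle pairs: contradiction
    have e14 : b₄ + c₄ ≠ g + v₁ := by rw [← h4, ← hu1]; exact Ne.symm d14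
    have e24 : b₄ + c₄ ≠ g + v₂ := by rw [← h4, ← hu2]; exact Ne.symm d24
    have e34 : b₄ + c₄ ≠ v₁ + v₂ := by rw [← h4, ← hu3]; exact Ne.symm d34
    by_cases hg4 : g = b₄ ∨ g = c₄
    · have i43 := intersect ℬ hB h4 hu3 hb4 hc4 hv1 hv2 ne4 hv12
        (Ne.symm d34) (by rw [add_comm u₄ u₃]; exact m34)
      rcases hg4 with hh | hh <;> rcases i43 with h | h | h | h
      · exact hv1g (hh.trans h).symm
      · exact hv2g (hh.trans h).symm
      · exact e14 (by rw [← hh, h])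
      · exact e24 (by rw [← hh, h])
      · exact e14 (by rw [← hh, h, add_comm])
      · exact e24 (by rw [← hh, h, add_comm])
      · exact hv1g (hh.trans h).symm
      · exact hv2g (hh.trans h).symm
    · push_neg at hg4
      obtain ⟨hgb4, hgc4⟩ := hg4
      have i41 : b₄ = v₁ ∨ c₄ = v₁ := by
        rcases intersect ℬ hB h4 hu1 hb4 hc4 hg hv1 ne4 (Ne.symm hv1g)
          (Ne.symm d14) (by rw [add_comm u₄ u₁]; exact m14)
          with h | h | h | h
        · exact absurd h.symm hgb4
        · exact Or.inl h
        · exact absurd h.symm hgc4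
        · exact Or.inr h
      have i42 : b₄ = v₂ ∨ c₄ = v₂ := by
        rcases intersect ℬ hB h4 hu2 hb4 hc4 hg hv2 ne4 (Ne.symm hv2g)
          (Ne.symm d24) (by rw [add_comm u₄ u₂]; exact m24)
          with h | h | h | h
        · exact absurd h.symm hgb4
        · exact Or.inl h
        · exact absurd h.symm hgc4
        · exact Or.inr h
      rcases i41 with h | h <;> rcases i42 with h' | h'
      · exact hv12 (h ▸ h' ▸ rfl)
      · exact e34 (by rw [h, h'])
      · exact e34 (by rw [h, h', add_comm])
      · exact hv12 (h ▸ h' ▸ rfl)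

lemma finset_five {α : Type*} [DecidableEq α] (s : Finset α) (h : 5 ≤ s.card) :
    ∃ a₀ a₁ a₂ a₃ a₄, a₀ ∈ s ∧ a₁ ∈ s ∧ a₂ ∈ s ∧ a₃ ∈ s ∧ a₄ ∈ s ∧
      a₁ ≠ a₀ ∧ a₂ ≠ a₀ ∧ a₃ ≠ a₀ ∧ a₄ ≠ a₀ ∧
      a₂ ≠ a₁ ∧ a₃ ≠ a₁ ∧ a₄ ≠ a₁ ∧ a₃ ≠ a₂ ∧ a₄ ≠ a₂ ∧ a₄ ≠ a₃ := by
  obtain ⟨a₀, m0⟩ := Finset.card_pos.mp (show 0 < s.card by omega)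
  have c1 : 4 ≤ (s.erase a₀).card := by rw [Finset.card_erase_of_mem m0]; omega
  obtain ⟨a₁, m1⟩ := Finset.card_pos.mp (show 0 < (s.erase a₀).card by omega)
  have c2 : 3 ≤ ((s.erase a₀).erase a₁).card := by
    rw [Finset.card_erase_of_mem m1]; omega
  obtain ⟨a₂, m2⟩ := Finset.card_pos.mp (show 0 < ((s.erase a₀).erase a₁).card by omega)
  have c3 : 2 ≤ (((s.erase a₀).erase a₁).erase a₂).card := by
    rw [Finset.card_erase_of_mem m2]; omega
  obtain ⟨a₃, m3⟩ := Finset.card_pos.mp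
    (show 0 < (((s.erase a₀).erase a₁).erase a₂).card by omega)
  have c4 : 1 ≤ ((((s.erase a₀).erase a₁).erase a₂).erase a₃).card := by
    rw [Finset.card_erase_of_mem m3]; omega
  obtain ⟨a₄, m4⟩ := Finset.card_pos.mp
    (show 0 < ((((s.erase a₀).erase a₁).erase a₂).erase a₃).card by omega)
  simp only [Finset.mem_erase] at m1 m2 m3 m4
  exact ⟨a₀, a₁, a₂, a₃, a₄, m0, m1.2, m2.2.2, m3.2.2.2, m4.2.2.2.2,
    m1.1, m2.2.1, m3.2.2.1, m4.2.2.2.1, m2.1, m3.2.1, m4.2.2.1, m3.1, m4.2.1, m4.1⟩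

end Stmt2Aux

open Stmt2Aux in
/-- If ℬ ⊆ (ℤ/2)^ℓ is linearly independent, 𝒜 ⊆ (ℤ/2)^ℓ has at least 5 elements and
𝒜 + 𝒜 ⊆ ℬ + ℬ, then there is a unique x with 𝒜 + x ⊆ ℬ. -/
theorem stmt_2 (ℓ : ℕ) (hℓ : 0 < ℓ) (ℬ 𝒜 : Set (Fin ℓ → ZMod 2))
    (hB : LinearIndependent (ZMod 2) ((↑) : ℬ → (Fin ℓ → ZMod 2)))
    (hA : 5 ≤ 𝒜.ncard) (hAB : 𝒜 + 𝒜 ⊆ ℬ + ℬ) :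
    ∃! x : Fin ℓ → ZMod 2, (fun a => a + x) '' 𝒜 ⊆ ℬ := by
  classical
  -- extract five distinct elements of 𝒜
  have hfin : 𝒜.Finite := by
    by_contra hinf
    rw [Set.Infinite.ncard hinf] at hA
    omega
  have hcard : 5 ≤ hfin.toFinset.card := by
    rwa [Set.ncard_eq_toFinset_card 𝒜 hfin] at hA
  obtain ⟨a₀, a₁, a₂, a₃, a₄, m0, m1, m2, m3, m4,
    n10, n20, n30, n40, n21, n31, n41, n32, n42, n43⟩ := finset_five _ hcard
  rw [Set.Finite.mem_toFinset] at m0 m1 m2 m3 m4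
  -- pairs for a₁..a₄
  have getpair : ∀ a ∈ 𝒜, a ≠ a₀ → ∃ b c, b ∈ ℬ ∧ c ∈ ℬ ∧ b ≠ c ∧ a + a₀ = b + c := by
    intro a ha hne
    have : a + a₀ ∈ ℬ + ℬ := hAB (Set.add_mem_add ha m0)
    rw [Set.mem_add] at this
    obtain ⟨b, hb, c, hc, hbc⟩ := this
    refine ⟨b, c, hb, hc, ?_, hbc.symm⟩
    rintro rfl
    apply hne
    apply eq_of_add_eq_zero'
    rw [← hbc, my_add_self]
  obtain ⟨b₁, c₁, hb1, hc1, ne1, h1⟩ := getpair a₁ m1 n10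
  obtain ⟨b₂, c₂, hb2, hc2, ne2, h2⟩ := getpair a₂ m2 n20
  obtain ⟨b₃, c₃, hb3, hc3, ne3, h3⟩ := getpair a₃ m3 n30
  obtain ⟨b₄, c₄, hb4, hc4, ne4, h4⟩ := getpair a₄ m4 n40
  -- distinctness of the sums and membership of pairwise sums
  have udist : ∀ {p q : Fin ℓ → ZMod 2}, p ≠ q → p + a₀ ≠ q + a₀ := by
    intro p q hpq h
    exact hpq (add_right_cancel h)
  have usum : ∀ p ∈ 𝒜, ∀ q ∈ 𝒜, (p + a₀) + (q + a₀) ∈ ℬ + ℬ := by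
    intro p hp q hq
    have : (p + a₀) + (q + a₀) = p + q := by
      rw [show (p + a₀) + (q + a₀) = (p + q) + (a₀ + a₀) by ring, my_add_self, add_zero]
    rw [this]
    exact hAB (Set.add_mem_add hp hq)
  obtain ⟨g, z₁, z₂, z₃, z₄, hg, hz1, hz2, hz3, hz4, gz1, gz2, gz3, gz4,
      hu1, hu2, hu3, hu4⟩ :=
    sunflower ℬ hB h1 h2 h3 h4 hb1 hc1 hb2 hc2 hb3 hc3 hb4 hc4 ne1 ne2 ne3 ne4
      (udist n21.symm) (udist n31.symm) (udist n41.symm)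
      (udist n32.symm) (udist n42.symm) (udist n43.symm)
      (usum a₁ m1 a₂ m2) (usum a₁ m1 a₃ m3) (usum a₁ m1 a₄ m4)
      (usum a₂ m2 a₃ m3) (usum a₂ m2 a₄ m4) (usum a₃ m3 a₄ m4)
  -- the common element g gives the translate x = a₀ + g
  have key : ∀ a ∈ 𝒜, a + (a₀ + g) ∈ ℬ := by
    intro a ha
    by_cases ha0 : a = a₀
    · subst ha0
      have : a + (a + g) = g := by
        rw [← add_assoc, my_add_self, zero_add]
      rw [this]; exact hg
    · have hz : ∃ z, z ∈ ℬ ∧ a + a₀ = g + z := by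
        by_cases he1 : a = a₁
        · exact ⟨z₁, hz1, he1 ▸ hu1⟩
        · by_cases he2 : a = a₂
          · exact ⟨z₂, hz2, he2 ▸ hu2⟩
          · by_cases he3 : a = a₃
            · exact ⟨z₃, hz3, he3 ▸ hu3⟩
            · obtain ⟨b, c, hb, hc, hbc, hsum⟩ := getpair a ha ha0
              have hp := pigeon ℬ hB hu1 hu2 hu3 hsum hg hz1 hz2 hz3 hb hc
                gz1 gz2 gz3 hbc
                (udist n21.symm) (udist n31.symm) (udist n32.symm)
                (udist (fun h => he1 h.symm)) (udist (fun h => he2 h.symm))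
                (udist (fun h => he3 h.symm))
                (usum a₁ m1 a ha) (usum a₂ m2 a ha) (usum a₃ m3 a ha)
              obtain ⟨z, hz, _, hz'⟩ := mem_pair_extract hsum hbc hp hb hc
              exact ⟨z, hz, hz'⟩
      obtain ⟨z, hz, hzeq⟩ := hz
      have : a + (a₀ + g) = z := by
        have := congrArg (· + g) hzeq
        rw [show a + a₀ + g = a + (a₀ + g) by ring] at this
        rw [show g + z + g = z + (g + g) by ring, my_add_self, add_zero] at this
        exact this
      rw [this]; exact hz
  refine ⟨a₀ + g, ?_, ?_⟩
  · intro v hv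
    obtain ⟨a, ha, rfl⟩ := hv
    exact key a ha
  · -- uniqueness
    intro y hy
    have hx' : ∀ a ∈ 𝒜, a + (a₀ + g) ∈ ℬ := key
    have hy' : ∀ a ∈ 𝒜, a + y ∈ ℬ := by
      intro a ha; exact hy ⟨a, ha, rfl⟩
    set x := a₀ + g with hxdef
    have pairx : ∀ p ∈ 𝒜, ∀ q ∈ 𝒜, p ≠ q → p + q = (p + x) + (q + x) := by
      intro p _ q _ _
      rw [show (p + x) + (q + x) = (p + q) + (x + x) by ring, my_add_self, add_zero]
    have pairy : ∀ p ∈ 𝒜, ∀ q ∈ 𝒜, p ≠ q → p + q = (p + y) + (q + y) := by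
      intro p _ q _ _
      rw [show (p + y) + (q + y) = (p + q) + (y + y) by ring, my_add_self, add_zero]
    have nexy : ∀ p q : Fin ℓ → ZMod 2, p ≠ q → ∀ w : Fin ℓ → ZMod 2, p + w ≠ q + w := by
      intro p q hpq w h
      exact hpq (add_right_cancel h)
    have r1 := rep_unique ℬ hB (pairy a₀ m0 a₁ m1 (fun h => n10 h.symm))
      (pairx a₀ m0 a₁ m1 (fun h => n10 h.symm))
      (hy' a₀ m0) (hy' a₁ m1) (hx' a₀ m0) (hx' a₁ m1)
      (nexy a₀ a₁ (fun h => n10 h.symm) y) (nexy a₀ a₁ (fun h => n10 h.symm) x)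
    rcases r1 with ⟨hh, _⟩ | ⟨hh, _⟩
    · exact add_left_cancel hh.symm
    · -- a₀ + x = a₁ + y : use a₂ to derive a contradiction
      have r2 := rep_unique ℬ hB (pairy a₀ m0 a₂ m2 (fun h => n20 h.symm))
        (pairx a₀ m0 a₂ m2 (fun h => n20 h.symm))
        (hy' a₀ m0) (hy' a₂ m2) (hx' a₀ m0) (hx' a₂ m2)
        (nexy a₀ a₂ (fun h => n20 h.symm) y) (nexy a₀ a₂ (fun h => n20 h.symm) x)
      rcases r2 with ⟨hh2, _⟩ | ⟨hh2, _⟩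
      · exact add_left_cancel hh2.symm
      · exfalso
        have : a₁ + y = a₂ + y := by rw [← hh, ← hh2]
        exact n21 (add_right_cancel this).symm
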